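/- Let n ≥ 1, let Q be an n × n real matrix with nonnegative entries, let δ ∈ (0, 1] and 0 < m ≤ n be real numbers, and suppose that ‖Q‖ ≤ 1 − δm/n and that for every natural number t and all indices s, x one has (Qᵗ)_{s,x} ≤ 1/n + (1−δ)ᵗ. Then for all natural numbers u, t, r and every index s: (Q^{u+t+r})_{s,s} ≤ ( 1/n + (1−δ)^u ) ( (1 − δm/n)^r + n(1−δ)^t ). -/
import Mathlib


open scoped BigOperators

/-- Diagonal bound for powers of a substochastic expander-walk matrix:
if all entries of `Q` are nonnegative, `‖Q‖ ≤ 1 − δm/n` for the ℓ²-operator norm,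
and `(Qᵗ)_{s,x} ≤ 1/n + (1−δ)ᵗ` entrywise, then
`(Q^{u+t+r})_{s,s} ≤ (1/n + (1−δ)^u)((1 − δm/n)^r + n(1−δ)^t)`. -/
theorem stmt17 (n : ℕ) (hn : 1 ≤ n) (Q : Matrix (Fin n) (Fin n) ℝ)
    (hQ0 : ∀ i j, 0 ≤ Q i j)
    (δ m : ℝ) (hδ0 : 0 < δ) (hδ1 : δ ≤ 1) (hm0 : 0 < m) (hmn : m ≤ n)
    (hnorm : ∀ x : Fin n → ℝ,
      Real.sqrt (∑ i, (Q.mulVec x) i ^ 2) ≤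
        (1 - δ * m / n) * Real.sqrt (∑ i, x i ^ 2))
    (hent : ∀ (t : ℕ) (s x : Fin n), (Q ^ t) s x ≤ 1 / n + (1 - δ) ^ t) :
    ∀ (u t r : ℕ) (s : Fin n),
      (Q ^ (u + t + r)) s s ≤
        (1 / n + (1 - δ) ^ u) * ((1 - δ * m / n) ^ r + n * (1 - δ) ^ t) := by
  have hn0 : (0 : ℝ) < n := by exact_mod_cast hn
  set c : ℝ := 1 - δ * m / n with hc
  have hc0 : 0 ≤ c := by
    have h1 : δ * m ≤ 1 * n := by
      apply mul_le_mul hδ1 hmn (le_of_lt hm0) zero_le_one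
    have h2 : δ * m / n ≤ 1 := by
      rw [div_le_one hn0]; linarith
    simp only [hc]; linarith
  have hc1 : c ≤ 1 := by
    have : 0 ≤ δ * m / n := by positivity
    simp only [hc]; linarith
  -- nonnegativity of entries of powers
  have hpow0 : ∀ (k : ℕ) (i j : Fin n), 0 ≤ (Q ^ k) i j := by
    intro k
    induction k with
    | zero => intro i j; simp [Matrix.one_apply]; positivity
    | succ k ih =>
      intro i j
      rw [pow_succ, Matrix.mul_apply]
      exact Finset.sum_nonneg fun y _ => mul_nonneg (ih i y) (hQ0 y j)
  -- iterated norm bound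
  have normA : ∀ (r : ℕ) (w : Fin n → ℝ),
      Real.sqrt (∑ i, ((Q ^ r).mulVec w) i ^ 2) ≤ c ^ r * Real.sqrt (∑ i, w i ^ 2) := by
    intro r
    induction r with
    | zero => intro w; simp [Matrix.one_mulVec]
    | succ r ih =>
      intro w
      have h1 : (Q ^ (r + 1)).mulVec w = (Q ^ r).mulVec (Q.mulVec w) := by
        rw [pow_succ, ← Matrix.mulVec_mulVec]
      rw [h1]
      calc Real.sqrt (∑ i, ((Q ^ r).mulVec (Q.mulVec w)) i ^ 2)
          ≤ c ^ r * Real.sqrt (∑ i, (Q.mulVec w) i ^ 2) := ih _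
        _ ≤ c ^ r * (c * Real.sqrt (∑ i, w i ^ 2)) := by
            exact mul_le_mul_of_nonneg_left (hnorm w) (by positivity)
        _ = c ^ (r + 1) * Real.sqrt (∑ i, w i ^ 2) := by ring
  intro u t r s
  set α : ℝ := 1 / n + (1 - δ) ^ u with hα
  have h1δ : (0:ℝ) ≤ 1 - δ := by linarith
  have hα0 : 0 ≤ α := by positivity
  set β : ℝ := 1 / n + (1 - δ) ^ t with hβ
  have hβ0 : 0 ≤ β := by positivity
  set w : Fin n → ℝ := fun z => (Q ^ t) z s with hw
  set v : Fin n → ℝ := fun y => ((Q ^ r).mulVec w) y with hv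
  -- step 1: diagonal entry ≤ α * column sum of Q^(t+r)
  have hsplit : (Q ^ (u + t + r)) s s = ∑ y, (Q ^ u) s y * (Q ^ (t + r)) y s := by
    rw [show u + t + r = u + (t + r) by ring, pow_add, Matrix.mul_apply]
  have hQtr : ∀ y, (Q ^ (t + r)) y s = v y := by
    intro y
    simp only [hv, Matrix.mulVec, dotProduct, hw]
    rw [show t + r = r + t by ring, pow_add, Matrix.mul_apply]
  have step1 : (Q ^ (u + t + r)) s s ≤ α * ∑ y, v y := by
    rw [hsplit, Finset.mul_sum]
    apply Finset.sum_le_sum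
    intro y _
    rw [hQtr y]
    have hv0 : 0 ≤ v y := by rw [← hQtr y]; exact hpow0 _ _ _
    exact mul_le_mul_of_nonneg_right (hent u s y) hv0
  -- step 2: column sum bound via Cauchy-Schwarz + norm bound
  have cauchy : ∑ y, v y ≤ Real.sqrt n * Real.sqrt (∑ y, v y ^ 2) := by
    have h := sq_sum_le_card_mul_sum_sq (s := (Finset.univ : Finset (Fin n))) (f := v)
    simp only [Finset.card_univ, Fintype.card_fin] at h
    have h2 : Real.sqrt ((∑ y, v y) ^ 2) ≤ Real.sqrt (n * ∑ y, v y ^ 2) := by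
      apply Real.sqrt_le_sqrt; exact_mod_cast h
    calc ∑ y, v y ≤ |∑ y, v y| := le_abs_self _
      _ = Real.sqrt ((∑ y, v y) ^ 2) := by rw [Real.sqrt_sq_eq_abs]
      _ ≤ Real.sqrt (n * ∑ y, v y ^ 2) := h2
      _ = Real.sqrt n * Real.sqrt (∑ y, v y ^ 2) := Real.sqrt_mul (by positivity) _
  have hwnorm : Real.sqrt (∑ i, w i ^ 2) ≤ Real.sqrt n * β := by
    have h : ∑ i, w i ^ 2 ≤ ∑ _i : Fin n, β ^ 2 := by
      apply Finset.sum_le_sum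
      intro i _
      have h1 : 0 ≤ w i := hpow0 t i s
      have h2 : w i ≤ β := hent t i s
      nlinarith
    calc Real.sqrt (∑ i, w i ^ 2) ≤ Real.sqrt (∑ _i : Fin n, β ^ 2) :=
          Real.sqrt_le_sqrt h
      _ = Real.sqrt (n * β ^ 2) := by rw [Finset.sum_const]; simp [mul_comm]
      _ = Real.sqrt n * β := by
          rw [Real.sqrt_mul (by positivity), Real.sqrt_sq hβ0]
  have step2 : ∑ y, v y ≤ n * (c ^ r * β) := by
    calc ∑ y, v y ≤ Real.sqrt n * Real.sqrt (∑ y, v y ^ 2) := cauchy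
      _ ≤ Real.sqrt n * (c ^ r * Real.sqrt (∑ i, w i ^ 2)) := by
          exact mul_le_mul_of_nonneg_left (normA r w) (Real.sqrt_nonneg _)
      _ ≤ Real.sqrt n * (c ^ r * (Real.sqrt n * β)) := by
          apply mul_le_mul_of_nonneg_left _ (Real.sqrt_nonneg _)
          exact mul_le_mul_of_nonneg_left hwnorm (by positivity)
      _ = (Real.sqrt n * Real.sqrt n) * (c ^ r * β) := by ring
      _ = n * (c ^ r * β) := by
          rw [Real.mul_self_sqrt (by positivity : (0:ℝ) ≤ (n:ℝ))]
  have step3 : (n : ℝ) * (c ^ r * β) ≤ c ^ r + n * (1 - δ) ^ t := by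
    have hβexp : (n : ℝ) * (c ^ r * β) = c ^ r * ((n:ℝ) * (1/n)) + c ^ r * (n * (1 - δ) ^ t) := by
      rw [hβ]; ring
    have hcr1 : c ^ r ≤ 1 := pow_le_one₀ hc0 hc1
    have hcr0 : (0:ℝ) ≤ c ^ r := by positivity
    have hn1 : (n : ℝ) * (1 / n) = 1 := by field_simp
    rw [hβexp, hn1]
    have : c ^ r * (n * (1 - δ) ^ t) ≤ n * (1 - δ) ^ t := by
      have h0 : (0:ℝ) ≤ n * (1 - δ) ^ t := by positivity
      nlinarith
    linarith
  calc (Q ^ (u + t + r)) s s ≤ α * ∑ y, v y := step1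
    _ ≤ α * (n * (c ^ r * β)) := mul_le_mul_of_nonneg_left step2 hα0
    _ ≤ α * (c ^ r + n * (1 - δ) ^ t) := mul_le_mul_of_nonneg_left step3 hα0
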